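/- The function g(x,y), defined for x ∈ [0,1] and y ∈ [1,∞) by g(x,y) = x·(1−x²)^{(y−1)/2} if x < 1/√y and g(x,y) = (1/√y)·(1−1/y)^{(y−1)/2} if x ≥ 1/√y, is non-decreasing in x (for each fixed y) and non-increasing in y (for each fixed x). -/

import Mathlib

/-- The function `g(x, y)` from the paper: `g(x,y) = x (1-x²)^{(y-1)/2}` if
`x < 1/√y`, and `g(x,y) = (1/√y)(1-1/y)^{(y-1)/2}` if `x ≥ 1/√y`. -/
noncomputable def g (x y : ℝ) : ℝ :=
  if x < 1 / Real.sqrt y then x * (1 - x ^ 2) ^ ((y - 1) / 2)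
  else (1 / Real.sqrt y) * (1 - 1 / y) ^ ((y - 1) / 2)

open Real Set

/-- The first-branch function. -/
noncomputable def fb (y x : ℝ) : ℝ := x * (1 - x ^ 2) ^ ((y - 1) / 2)

lemma sqrt_pos' {y : ℝ} (hy : 1 ≤ y) : 0 < Real.sqrt y :=
  Real.sqrt_pos.mpr (by linarith)

lemma inv_sqrt_le_one {y : ℝ} (hy : 1 ≤ y) : 1 / Real.sqrt y ≤ 1 := by
  rw [div_le_one (sqrt_pos' hy)]
  exact Real.one_le_sqrt.mpr hy

lemma sq_inv_sqrt {y : ℝ} (hy : 1 ≤ y) : (1 / Real.sqrt y) ^ 2 = 1 / y := by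
  rw [div_pow, one_pow, Real.sq_sqrt (by linarith)]

/-- The flat value of `g` equals `fb y (1/√y)`. -/
lemma flat_eq {y : ℝ} (hy : 1 ≤ y) :
    (1 / Real.sqrt y) * (1 - 1 / y) ^ ((y - 1) / 2) = fb y (1 / Real.sqrt y) := by
  rw [fb, sq_inv_sqrt hy]

/-- `fb y` is monotone on `[0, 1/√y]`. -/
lemma fb_mono {y : ℝ} (hy : 1 ≤ y) : MonotoneOn (fb y) (Icc 0 (1 / Real.sqrt y)) := by
  rcases eq_or_lt_of_le hy with h1 | h1
  · intro a _ b _ hab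
    simp only [fb, ← h1, sub_self, zero_div, Real.rpow_zero, mul_one]
    exact hab
  · have hy0 : 0 < y := by linarith
    have hsub : 0 < 1 - 1 / y := by
      have : 1 / y < 1 := by rw [div_lt_one hy0]; exact h1
      linarith
    have hbase : ∀ x ∈ Icc (0:ℝ) (1 / Real.sqrt y), 0 < 1 - x ^ 2 := by
      intro x hx
      have hx2 : x ^ 2 ≤ 1 / y := by
        have := pow_le_pow_left₀ hx.1 hx.2 2
        rwa [sq_inv_sqrt hy] at this
      linarith
    set p : ℝ := (y - 1) / 2 with hp
    have hp0 : 0 < p := by rw [hp]; linarith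
    have hder : ∀ x ∈ Ioo (0:ℝ) (1 / Real.sqrt y),
        HasDerivAt (fb y) ((1 - x^2) ^ (p-1) * (1 - y * x^2)) x := by
      intro x hx
      have hxm : x ∈ Icc (0:ℝ) (1 / Real.sqrt y) := ⟨hx.1.le, hx.2.le⟩
      have hb := hbase x hxm
      have h1' : HasDerivAt (fun x : ℝ => 1 - x ^ 2) (-(2 * x)) x := by
        simpa using ((hasDerivAt_pow 2 x).const_sub 1)
      have h2 : HasDerivAt (fun u : ℝ => u ^ p) (p * (1 - x^2) ^ (p - 1)) (1 - x^2) :=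
        Real.hasDerivAt_rpow_const (Or.inl hb.ne')
      have h3 : HasDerivAt (fun x : ℝ => (1 - x^2) ^ p)
          (p * (1 - x^2) ^ (p - 1) * (-(2 * x))) x := by
        have := h2.comp x h1'; exact this
      have h4 : HasDerivAt (fb y)
          (1 * (1 - x^2) ^ p + x * (p * (1 - x^2) ^ (p - 1) * (-(2 * x)))) x :=
        (hasDerivAt_id x).mul h3
      convert h4 using 1
      have hsplit : (1 - x^2) ^ p = (1 - x^2) ^ (p - 1) * (1 - x^2) := by
        have h5 : (1 - x^2) ^ (p - 1) * (1 - x^2) ^ (1:ℝ) = (1 - x^2) ^ p := by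
          rw [← Real.rpow_add hb]; ring_nf
        rw [Real.rpow_one] at h5
        exact h5.symm
      rw [hsplit]
      have hy2p : y = 2 * p + 1 := by rw [hp]; ring
      rw [hy2p]; ring
    apply monotoneOn_of_deriv_nonneg (convex_Icc _ _)
    · apply ContinuousOn.mul continuousOn_id
      intro x hx
      exact (((continuous_const.sub (continuous_pow 2)).continuousAt).rpow_const
        (Or.inl (hbase x hx).ne')).continuousWithinAt
    · rw [interior_Icc]
      intro x hx
      exact ((hder x hx).differentiableAt).differentiableWithinAt
    · rw [interior_Icc]
      intro x hx
      rw [(hder x hx).deriv]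
      have hxm : x ∈ Icc (0:ℝ) (1 / Real.sqrt y) := ⟨hx.1.le, hx.2.le⟩
      have hb := hbase x hxm
      have hx2 : y * x ^ 2 < 1 := by
        have h2 : x ^ 2 < 1 / y := by
          have := pow_lt_pow_left₀ hx.2 hx.1.le (n := 2) (by norm_num)
          rwa [sq_inv_sqrt hy] at this
        calc y * x ^ 2 < y * (1 / y) := by
              exact mul_lt_mul_of_pos_left h2 hy0
          _ = 1 := by field_simp
      have := Real.rpow_nonneg hb.le (p - 1)
      nlinarith

/-- Pointwise antitonicity in `y`. -/
lemma fb_anti {x y y' : ℝ} (hx0 : 0 ≤ x) (hx1 : x ≤ 1) (hy : 1 ≤ y) (hyy : y ≤ y') :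
    fb y' x ≤ fb y x := by
  unfold fb
  apply mul_le_mul_of_nonneg_left _ hx0
  rcases eq_or_lt_of_le (by nlinarith : x ^ 2 ≤ 1) with h | h
  · rw [show (1:ℝ) - x ^ 2 = 0 by linarith]
    rcases eq_or_lt_of_le (by linarith : (0:ℝ) ≤ (y - 1) / 2) with hp | hp
    · rw [← hp, Real.rpow_zero]
      rcases eq_or_lt_of_le (by linarith : (0:ℝ) ≤ (y' - 1) / 2) with hp' | hp'
      · rw [← hp', Real.rpow_zero]
      · rw [Real.zero_rpow hp'.ne']; norm_num
    · rw [Real.zero_rpow (by linarith : ((y' - 1) / 2) ≠ 0), Real.zero_rpow hp.ne']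
  · exact Real.rpow_le_rpow_of_exponent_ge (by linarith) (by nlinarith) (by linarith)

lemma g_eq_fb_of_lt {x y : ℝ} (h : x < 1 / Real.sqrt y) : g x y = fb y x := if_pos h

lemma g_eq_flat {x y : ℝ} (hy : 1 ≤ y) (h : ¬ x < 1 / Real.sqrt y) :
    g x y = fb y (1 / Real.sqrt y) := by
  rw [g, if_neg h, flat_eq hy]

/-- On `x ∈ [0,1]`, `y ∈ [1,∞)`, the function `g` is non-decreasing in `x`
(for each fixed `y`) and non-increasing in `y` (for each fixed `x`). -/
theorem g_monotone :
    (∀ y : ℝ, 1 ≤ y → ∀ x x' : ℝ, 0 ≤ x → x ≤ x' → x' ≤ 1 → g x y ≤ g x' y) ∧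
    (∀ x : ℝ, 0 ≤ x → x ≤ 1 → ∀ y y' : ℝ, 1 ≤ y → y ≤ y' → g x y' ≤ g x y) := by
  constructor
  · intro y hy x x' hx0 hxx hx1
    have hinv0 : 0 < 1 / Real.sqrt y := by positivity
    by_cases hx' : x' < 1 / Real.sqrt y
    · have hx : x < 1 / Real.sqrt y := lt_of_le_of_lt hxx hx'
      rw [g_eq_fb_of_lt hx, g_eq_fb_of_lt hx']
      exact fb_mono hy ⟨hx0, hx.le⟩ ⟨hx0.trans hxx, hx'.le⟩ hxx
    · rw [g_eq_flat hy hx']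
      by_cases hx : x < 1 / Real.sqrt y
      · rw [g_eq_fb_of_lt hx]
        exact fb_mono hy ⟨hx0, hx.le⟩ ⟨hinv0.le, le_refl _⟩ hx.le
      · rw [g_eq_flat hy hx]
  · intro x hx0 hx1 y y' hy hyy
    have hy' : 1 ≤ y' := hy.trans hyy
    have hinv0 : 0 < 1 / Real.sqrt y := by positivity
    have hinv0' : 0 < 1 / Real.sqrt y' := by positivity
    have hinvle : 1 / Real.sqrt y' ≤ 1 / Real.sqrt y := by
      apply one_div_le_one_div_of_le (sqrt_pos' hy)
      exact Real.sqrt_le_sqrt hyy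
    by_cases hb' : x < 1 / Real.sqrt y'
    · have hb : x < 1 / Real.sqrt y := lt_of_lt_of_le hb' hinvle
      rw [g_eq_fb_of_lt hb', g_eq_fb_of_lt hb]
      exact fb_anti hx0 hx1 hy hyy
    · rw [g_eq_flat hy' hb']
      have step1 : fb y' (1 / Real.sqrt y') ≤ fb y (1 / Real.sqrt y') :=
        fb_anti hinv0'.le (inv_sqrt_le_one hy') hy hyy
      by_cases hb : x < 1 / Real.sqrt y
      · rw [g_eq_fb_of_lt hb]
        refine step1.trans (fb_mono hy ⟨hinv0'.le, hinvle⟩ ⟨hx0, hb.le⟩ (not_lt.mp hb'))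
      · rw [g_eq_flat hy hb]
        exact step1.trans (fb_mono hy ⟨hinv0'.le, hinvle⟩ ⟨hinv0.le, le_refl _⟩ hinvle)
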